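/- Under the hypotheses of the preceding uniform integrability statement: if (g_n) ⊂ B_b(Ω) is a uniformly bounded sequence with g_n(x) → 0 for μ-almost every x ∈ Ω, and (t_n) ⊂ [2τ, ∞) is any sequence, then (T(t_n)g_n)(x) → 0 for every x ∈ Ω. -/

import Mathlib

open MeasureTheory Filter Topology Set

/-- `Bb f`: `f` is a bounded Borel measurable real-valued function. -/
def Bb {Ω : Type*} [MeasurableSpace Ω] (f : Ω → ℝ) : Prop :=
  Measurable f ∧ ∃ C : ℝ, ∀ x, |f x| ≤ C

theorem stmt_15 {Ω : Type*} [TopologicalSpace Ω] [T2Space Ω] [SecondCountableTopology Ω]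
    [MeasurableSpace Ω] [BorelSpace Ω]
    (μ : Measure Ω) [IsFiniteMeasure μ]
    (hμpos : ∀ U : Set Ω, IsOpen U → U.Nonempty → 0 < μ U)
    (T : ℝ → (Ω → ℝ) → (Ω → ℝ))
    (hTBb : ∀ t, 0 ≤ t → ∀ f, Bb f → Bb (T t f))
    (hadd : ∀ t, 0 ≤ t → ∀ f g, Bb f → Bb g → T t (f + g) = T t f + T t g)
    (hsmul : ∀ t, 0 ≤ t → ∀ (c : ℝ) (f), Bb f → T t (c • f) = c • T t f)
    (hpos : ∀ t, 0 ≤ t → ∀ f, Bb f → (∀ x, 0 ≤ f x) → ∀ x, 0 ≤ T t f x)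
    (hT0 : ∀ f, Bb f → T 0 f = f)
    (hsg : ∀ s t : ℝ, 0 ≤ s → 0 ≤ t → ∀ f, Bb f → T (s + t) f = T s (T t f))
    (hSF : ∀ t, 0 < t → ∀ f, Bb f → Continuous (T t f))
    (hinv : ∀ t, 0 ≤ t → ∀ f, Bb f → ∫ x, T t f x ∂μ = ∫ x, f x ∂μ)
    (τ : ℝ) (hτ : 0 < τ)
    (hbdd : ∃ M : ℝ, ∀ t, τ ≤ t → ∀ f, Bb f → (∀ x, |f x| ≤ 1) → ∀ x, |T t f x| ≤ M)
    (K : ℝ → Ω → Ω → ℝ)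
    (hK : ∀ t, 0 < t → ∀ x : Ω, (∀ᵐ y ∂μ, 0 ≤ K t x y) ∧ Integrable (K t x) μ ∧
      ∀ f, Bb f → T t f x = ∫ y, K t x y * f y ∂μ)
    (hequi : ∀ c t : ℝ, 0 < c → 0 < t → ∀ x : Ω, ∀ ε > (0 : ℝ),
      ∃ U : Set Ω, IsOpen U ∧ x ∈ U ∧ ∀ y ∈ U, ∀ f, Bb f → (∀ z, |f z| ≤ c) →
        |T t f y - T t f x| < ε)
    (hui : ∀ x : Ω, ∀ ε > (0 : ℝ), ∃ δ > (0 : ℝ), ∀ t, 2 * τ ≤ t →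
      ∀ A : Set Ω, MeasurableSet A → μ A < ENNReal.ofReal δ →
        ∫ y in A, K t x y ∂μ < ε) :
    ∀ g : ℕ → Ω → ℝ, (∀ n, Bb (g n)) → (∃ c : ℝ, ∀ n x, |g n x| ≤ c) →
      (∀ᵐ x ∂μ, Tendsto (fun n => g n x) atTop (nhds 0)) →
      ∀ tn : ℕ → ℝ, (∀ n, 2 * τ ≤ tn n) →
      ∀ x : Ω, Tendsto (fun n => T (tn n) (g n) x) atTop (nhds 0) := by
  intro g hgBb hgc hgae tn htn x
  obtain ⟨c, hc⟩ := hgc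
  obtain ⟨M, hM⟩ := hbdd
  set c' : ℝ := max c 1 with hc'def
  have hc'pos : 0 < c' := lt_of_lt_of_le one_pos (le_max_right _ _)
  have hc' : ∀ n y, |g n y| ≤ c' := fun n y => (hc n y).trans (le_max_left _ _)
  set M' : ℝ := max M 1 with hM'def
  have hM'pos : 0 < M' := lt_of_lt_of_le one_pos (le_max_right _ _)
  have htnpos : ∀ n, 0 < tn n := fun n =>
    lt_of_lt_of_le (by linarith) (htn n)
  have htnτ : ∀ n, τ ≤ tn n := fun n => le_trans (by linarith) (htn n)
  -- total mass bound : ∫ K (tn n) x ≤ M'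
  have hmass : ∀ n, ∫ y, K (tn n) x y ∂μ ≤ M' := by
    intro n
    have hone : Bb (fun _ : Ω => (1 : ℝ)) := ⟨measurable_const, 1, fun _ => by norm_num⟩
    have h1 := (hK (tn n) (htnpos n) x).2.2 _ hone
    have h2 : |T (tn n) (fun _ => (1 : ℝ)) x| ≤ M :=
      hM _ (htnτ n) _ hone (fun _ => by norm_num) x
    calc ∫ y, K (tn n) x y ∂μ = ∫ y, K (tn n) x y * 1 ∂μ := by simp
      _ = T (tn n) (fun _ => (1 : ℝ)) x := h1.symm
      _ ≤ |T (tn n) (fun _ => (1 : ℝ)) x| := le_abs_self _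
      _ ≤ M := h2
      _ ≤ M' := le_max_left _ _
  rw [Metric.tendsto_atTop]
  intro ε hε
  -- uniform integrability: choose δ for ε/(2c')
  obtain ⟨δ, hδpos, hδ⟩ := hui x (ε / (2 * c')) (by positivity)
  -- Egoroff
  obtain ⟨s, hs_meas, hs_small, hs_unif⟩ :=
    MeasureTheory.tendstoUniformlyOn_of_ae_tendsto'
      (f := g) (g := fun _ => (0 : ℝ)) (μ := μ)
      (fun n => ((hgBb n).1).stronglyMeasurable) stronglyMeasurable_const hgae
      (show (0:ℝ) < δ / 2 by positivity)
  have hs_lt : μ s < ENNReal.ofReal δ :=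
    lt_of_le_of_lt hs_small (ENNReal.ofReal_lt_ofReal_iff hδpos |>.2 (by linarith))
  -- uniform smallness of g n on sᶜ eventually
  have hev := Metric.tendstoUniformlyOn_iff.1 hs_unif (ε / (2 * M')) (by positivity)
  rw [eventually_atTop] at hev
  obtain ⟨N, hN⟩ := hev
  refine ⟨N, fun n hn => ?_⟩
  have hKn := hK (tn n) (htnpos n) x
  obtain ⟨hKpos, hKint, hKrep⟩ := hKn
  have hgsmall : ∀ y ∈ sᶜ, |g n y| ≤ ε / (2 * M') := by
    intro y hy
    have := hN n hn y hy
    rw [Real.dist_eq] at this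
    rw [← abs_neg]
    simpa using this.le
  -- integrability of the product
  have hprod : Integrable (fun y => K (tn n) x y * g n y) μ := by
    have h1 : Integrable (fun y => g n y * K (tn n) x y) μ :=
      hKint.bdd_mul ((hgBb n).1.aestronglyMeasurable) (c := c') (ae_of_all _ fun y => by
        simpa only [Real.norm_eq_abs] using hc' n y)
    exact h1.congr (ae_of_all _ fun y => mul_comm _ _)
  have habs : Integrable (fun y => |K (tn n) x y * g n y|) μ := hprod.abs
  -- split
  have hsplit : ∫ y, |K (tn n) x y * g n y| ∂μ =
      (∫ y in s, |K (tn n) x y * g n y| ∂μ) + ∫ y in sᶜ, |K (tn n) x y * g n y| ∂μ :=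
    (integral_add_compl hs_meas habs).symm
  -- bound on s
  have hb1 : ∫ y in s, |K (tn n) x y * g n y| ∂μ ≤ c' * ∫ y in s, K (tn n) x y ∂μ := by
    rw [← integral_const_mul]
    refine integral_mono_ae habs.restrict (hKint.restrict.const_mul c') ?_
    filter_upwards [ae_restrict_of_ae hKpos] with y hy
    rw [abs_mul, abs_of_nonneg hy, mul_comm c']
    exact mul_le_mul_of_nonneg_left (hc' n y) hy
  -- bound on sᶜ
  have hb2 : ∫ y in sᶜ, |K (tn n) x y * g n y| ∂μ ≤
      (ε / (2 * M')) * ∫ y in sᶜ, K (tn n) x y ∂μ := by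
    rw [← integral_const_mul]
    refine integral_mono_ae habs.restrict (hKint.restrict.const_mul _) ?_
    have hmem : ∀ᵐ y ∂μ.restrict sᶜ, y ∈ sᶜ :=
      (ae_restrict_iff' hs_meas.compl).2 (ae_of_all _ fun y hy => hy)
    filter_upwards [ae_restrict_of_ae hKpos, hmem] with y hy hymem
    rw [abs_mul, abs_of_nonneg hy, mul_comm (ε / (2 * M'))]
    exact mul_le_mul_of_nonneg_left (hgsmall y hymem) hy
  have hintS : ∫ y in s, K (tn n) x y ∂μ < ε / (2 * c') := hδ (tn n) (htn n) s hs_meas hs_lt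
  have hintSc : ∫ y in sᶜ, K (tn n) x y ∂μ ≤ M' :=
    le_trans (setIntegral_le_integral hKint hKpos) (hmass n)
  have hfinal : |T (tn n) (g n) x| < ε := by
    rw [hKrep _ (hgBb n)]
    calc |∫ y, K (tn n) x y * g n y ∂μ| ≤ ∫ y, |K (tn n) x y * g n y| ∂μ :=
          by simpa only [Real.norm_eq_abs] using
            norm_integral_le_integral_norm (μ := μ) (fun y => K (tn n) x y * g n y)
      _ = (∫ y in s, |K (tn n) x y * g n y| ∂μ) + ∫ y in sᶜ, |K (tn n) x y * g n y| ∂μ := hsplit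
      _ ≤ c' * (∫ y in s, K (tn n) x y ∂μ) + (ε / (2 * M')) * ∫ y in sᶜ, K (tn n) x y ∂μ :=
          add_le_add hb1 hb2
      _ < c' * (ε / (2 * c')) + (ε / (2 * M')) * M' := by
          apply add_lt_add_of_lt_of_le
          · exact mul_lt_mul_of_pos_left hintS hc'pos
          · exact mul_le_mul_of_nonneg_left hintSc (by positivity)
      _ = ε := by field_simp; ring
  rw [Real.dist_eq, sub_zero]
  exact hfinal
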